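/- Under the standing assumption on Q, the weak* closure of I(H_Q) + X′′_− and the weak* closure of 𝔥_Q + X′′_− are both equal to K_Q. -/

import Mathlib

open NormedSpace Pointwise

/-- Positivity in the dual of an ordered normed space. -/
def dualNonneg (X : Type*) [NormedAddCommGroup X] [NormedSpace ℝ X] [Lattice X]
    (η : StrongDual ℝ X) : Prop :=
  ∀ f : X, 0 ≤ f → 0 ≤ η f

/-- Positivity in the bidual. -/
def bidualNonneg (X : Type*) [NormedAddCommGroup X] [NormedSpace ℝ X] [Lattice X]
    (a : StrongDual ℝ (StrongDual ℝ X)) : Prop :=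
  ∀ η : StrongDual ℝ X, dualNonneg X η → 0 ≤ a η

/-- The weak* closure of a subset of the bidual `X′′ = (X′)′`. -/
noncomputable def wstarClosure (X : Type*) [NormedAddCommGroup X] [NormedSpace ℝ X]
    (S : Set (StrongDual ℝ (StrongDual ℝ X))) : Set (StrongDual ℝ (StrongDual ℝ X)) :=
  StrongDual.toWeakDual ⁻¹' closure (StrongDual.toWeakDual '' S)

lemma exists_eval_rep (Y : Type*) [NormedAddCommGroup Y] [NormedSpace ℝ Y]
    (φ : WeakDual ℝ Y →L[ℝ] ℝ) :
    ∃ η : Y, ∀ w : WeakDual ℝ Y, φ w = w η := by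
  classical
  have : Nonempty Y := ⟨0⟩
  have hsem := (topDualPairing ℝ Y).weakBilin_withSeminorms
  have hcont : Continuous ⇑(LinearMap.toSeminorm (φ.toLinearMap)) := φ.continuous.norm
  obtain ⟨s, C, hC0, hle⟩ := Seminorm.bound_of_continuous hsem _ hcont
  have hker : ∀ w : WeakDual ℝ Y, (∀ i ∈ s, w i = 0) → φ w = 0 := by
    intro w hw
    have h1 : LinearMap.toSeminorm (φ.toLinearMap) w ≤
        (C • s.sup ((topDualPairing ℝ Y).toSeminormFamily)) w := hle w
    have h2 : (s.sup ((topDualPairing ℝ Y).toSeminormFamily)) w ≤ 0 := by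
      refine Seminorm.finset_sup_apply_le le_rfl fun i hi => ?_
      show ‖w i‖ ≤ 0
      simp [hw i hi]
    have h3 : ‖φ w‖ ≤ 0 := by
      refine h1.trans ?_
      erw [Seminorm.smul_apply]
      calc (C : ℝ) • (s.sup ((topDualPairing ℝ Y).toSeminormFamily)) w
          ≤ (C : ℝ) • (0:ℝ) := smul_le_smul_of_nonneg_left h2 (by positivity)
        _ = 0 := by simp
    simpa using le_antisymm h3 (norm_nonneg _)
  let L : ↥s → (StrongDual ℝ Y →ₗ[ℝ] ℝ) := fun i => (topDualPairing ℝ Y).flip (i : Y)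
  let KL : StrongDual ℝ Y →ₗ[ℝ] ℝ := φ.toLinearMap
  have hinf : ⨅ i, LinearMap.ker (L i) ≤ LinearMap.ker KL := by
    intro x hx
    rw [Submodule.mem_iInf] at hx
    have hx' : ∀ i ∈ s, x i = 0 := by
      intro i hi
      have := hx ⟨i, hi⟩
      simpa [L, topDualPairing_apply] using this
    exact LinearMap.mem_ker.2 (hker x hx')
  obtain ⟨c, hc⟩ := (Submodule.mem_span_range_iff_exists_fun ℝ).1 (mem_span_of_iInf_ker_le_ker hinf)
  refine ⟨∑ i : ↥s, c i • (i : Y), fun w => ?_⟩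
  have h1 : KL w = φ w := rfl
  rw [← h1, ← hc]
  simp [L, topDualPairing_apply, map_sum, map_smul]
  exact (Finset.sum_apply (StrongDual.toWeakDual.symm w) _ _).trans rfl

/-- order-unit bound from the norm formula -/
lemma exists_unit_bound {X : Type*} [NormedAddCommGroup X] [Lattice X] [HasSolidNorm X] [IsOrderedAddMonoid X] [NormedSpace ℝ X] (e : X)
    (hnorm : ∀ f : X, ‖f‖ = sInf {c : ℝ | -(c • e) ≤ f ∧ f ≤ c • e}) (f : X) :
    ∃ c : ℝ, -(c • e) ≤ f ∧ f ≤ c • e := by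
  by_contra h
  push_neg at h
  have hempty : {c : ℝ | -(c • e) ≤ f ∧ f ≤ c • e} = ∅ := by
    ext c
    simp only [Set.mem_setOf_eq, Set.mem_empty_iff_false, iff_false, not_and]
    exact fun h1 => h c h1
  have hnf := hnorm f
  rw [hempty, Real.sInf_empty] at hnf
  have hf0 : f = 0 := norm_eq_zero.mp hnf
  exact h 0 (by simp [hf0]) (by simp [hf0])

set_option maxHeartbeats 1000000 in
theorem stmt1
    (X : Type*) [NormedAddCommGroup X] [Lattice X] [HasSolidNorm X] [IsOrderedAddMonoid X] [NormedSpace ℝ X] [CompleteSpace X]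
    -- `e` is a positive order unit inducing the lattice norm of the AM-space `X`
    (e : X) (he : 0 ≤ e)
    (hnorm : ∀ f : X, ‖f‖ = sInf {c : ℝ | -(c • e) ≤ f ∧ f ≤ c • e})
    -- standing assumption on `Q`
    (H : Submodule ℝ X) (hH : IsClosed (H : Set X))
    (Q : Set (StrongDual ℝ X)) (hQne : Q.Nonempty) (hQcl : IsClosed Q) (hQconv : Convex ℝ Q)
    (hQ : Q = {η : StrongDual ℝ X | ∀ h ∈ H, η h = 0} ∩
      {η : StrongDual ℝ X | dualNonneg X η ∧ η e = 1}) :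
    wstarClosure X ((inclusionInDoubleDual ℝ X '' (H : Set X)) +
        {a : StrongDual ℝ (StrongDual ℝ X) | bidualNonneg X (-a)}) =
      {z : StrongDual ℝ (StrongDual ℝ X) | ∀ η ∈ Q, z η ≤ 0} ∧
    wstarClosure X (({a : StrongDual ℝ (StrongDual ℝ X) |
          ∀ η : StrongDual ℝ X, (∀ h ∈ H, η h = 0) → a η = 0}) +
        {a : StrongDual ℝ (StrongDual ℝ X) | bidualNonneg X (-a)}) =
      {z : StrongDual ℝ (StrongDual ℝ X) | ∀ η ∈ Q, z η ≤ 0} := by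
  classical
  set I := inclusionInDoubleDual ℝ X with hI
  set Cneg : Set (StrongDual ℝ (StrongDual ℝ X)) := {a | bidualNonneg X (-a)} with hCneg
  set S₁ : Set (StrongDual ℝ (StrongDual ℝ X)) := (I '' (H : Set X)) + Cneg with hS₁
  set S₂ : Set (StrongDual ℝ (StrongDual ℝ X)) :=
    ({a : StrongDual ℝ (StrongDual ℝ X) | ∀ η : StrongDual ℝ X, (∀ h ∈ H, η h = 0) → a η = 0}) + Cneg with hS₂
  set K : Set (StrongDual ℝ (StrongDual ℝ X)) := {z | ∀ η ∈ Q, z η ≤ 0} with hK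
  -- S₁ ⊆ S₂
  have h12 : S₁ ⊆ S₂ := by
    rintro a ha
    obtain ⟨x, hx, b, hb, rfl⟩ := Set.mem_add.1 ha
    obtain ⟨g, hgH, rfl⟩ := hx
    refine Set.add_mem_add ?_ hb
    intro η hη
    simp only [hI, dual_def]
    exact hη g hgH
  -- S₂ ⊆ K
  have h2K : S₂ ⊆ K := by
    rintro a ha η hηQ
    obtain ⟨x, hx, b, hb, rfl⟩ := Set.mem_add.1 ha
    rw [hQ] at hηQ
    obtain ⟨hann, hpos, -⟩ := hηQ
    have hx0 : x η = 0 := hx η hann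
    have hb0 : b η ≤ 0 := by
      have := hb η hpos
      simpa using this
    simp only [ContinuousLinearMap.add_apply, hx0, zero_add]
    exact hb0
  -- wstarClosure of any subset of K is in K
  have hKcl : ∀ S : Set (StrongDual ℝ (StrongDual ℝ X)), S ⊆ K → wstarClosure X S ⊆ K := by
    intro S hS z hz
    have hset : {w : WeakDual ℝ (StrongDual ℝ X) | ∀ η ∈ Q, w η ≤ 0} =
        ⋂ η ∈ Q, {w : WeakDual ℝ (StrongDual ℝ X) | w η ≤ 0} := by
      ext w; simp
    have hcl : IsClosed {w : WeakDual ℝ (StrongDual ℝ X) | ∀ η ∈ Q, w η ≤ 0} := by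
      rw [hset]
      exact isClosed_biInter fun η _ =>
        isClosed_le (WeakDual.eval_continuous η) continuous_const
    have himg : StrongDual.toWeakDual '' S ⊆ {w : WeakDual ℝ (StrongDual ℝ X) | ∀ η ∈ Q, w η ≤ 0} := by
      rintro w ⟨a, haS, rfl⟩ η hη
      exact hS haS η hη
    have := closure_minimal himg hcl hz
    exact fun η hη => this η hη
  -- K ⊆ wstarClosure X S₁
  have hmain : K ⊆ wstarClosure X S₁ := by
    intro z hz
    by_contra hzc
    have hzc' : StrongDual.toWeakDual z ∉ closure (StrongDual.toWeakDual '' S₁) := hzc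
    -- convexity
    have hCconv : Convex ℝ Cneg := by
      intro a ha b hb p q hp hq hpq
      intro μ hμ
      have h1 := ha μ hμ
      have h2 := hb μ hμ
      simp only [ContinuousLinearMap.neg_apply, ContinuousLinearMap.add_apply,
        ContinuousLinearMap.coe_smul', Pi.smul_apply, smul_eq_mul] at h1 h2 ⊢
      nlinarith
    have hS₁conv : Convex ℝ S₁ :=
      (H.convex.linear_image I.toLinearMap).add hCconv
    have hconv : Convex ℝ (closure (StrongDual.toWeakDual '' S₁)) :=
      Convex.closure (E := WeakDual ℝ (StrongDual ℝ X)) (hS₁conv.linear_image (StrongDual.toWeakDual (𝕜 := ℝ) (E := StrongDual ℝ X)).toLinearMap)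
    letI : LocallyConvexSpace ℝ (WeakDual ℝ (StrongDual ℝ X)) :=
      by exact WeakBilin.locallyConvexSpace (𝕜 := ℝ) (E := StrongDual ℝ (StrongDual ℝ X)) (F := StrongDual ℝ X) (B := topDualPairing ℝ (StrongDual ℝ X))
    obtain ⟨φ, u, hfu, huz⟩ :=
      geometric_hahn_banach_closed_point hconv isClosed_closure hzc'
    obtain ⟨η, hη⟩ := exists_eval_rep (StrongDual ℝ X) φ
    have hfS : ∀ a ∈ S₁, a η < u := by
      intro a ha
      have := hfu (StrongDual.toWeakDual a) (subset_closure (Set.mem_image_of_mem _ ha))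
      rwa [hη] at this
    have hzη : u < z η := by
      have := huz
      rwa [hη] at this
    -- u > 0
    have hu0 : 0 < u := by
      have h0 : (0 : StrongDual ℝ (StrongDual ℝ X)) ∈ S₁ := by
        have : (0 : StrongDual ℝ (StrongDual ℝ X)) + 0 ∈ S₁ :=
          Set.add_mem_add ⟨0, H.zero_mem, by simp⟩
            (fun μ hμ => by simp)
        simpa using this
      have := hfS 0 h0
      simpa using this
    -- Cneg ⊆ S₁ and I '' H ⊆ S₁
    have hCS : ∀ b ∈ Cneg, b ∈ S₁ := by
      intro b hb
      have : (0 : StrongDual ℝ (StrongDual ℝ X)) + b ∈ S₁ :=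
        Set.add_mem_add ⟨0, H.zero_mem, by simp⟩ hb
      simpa using this
    have hIS : ∀ g ∈ H, I g ∈ S₁ := by
      intro g hg
      have : I g + 0 ∈ S₁ :=
        Set.add_mem_add ⟨g, hg, rfl⟩ (fun μ hμ => by simp)
      simpa using this
    -- η annihilates H
    have hann : ∀ h ∈ H, η h = 0 := by
      intro g hg
      by_contra hne
      have ht : ∀ t : ℝ, t * η g < u := by
        intro t
        have := hfS (I (t • g)) (hIS _ (H.smul_mem t hg))
        simpa [hI, dual_def, map_smul, smul_eq_mul] using this
      have := ht ((u + 1) / η g)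
      rw [div_mul_cancel₀ _ hne] at this
      linarith
    -- η is nonneg
    have hpos : dualNonneg X η := by
      intro g hg
      by_contra hneg
      push_neg at hneg
      have hb : ∀ t : ℝ, 0 ≤ t → -(t * η g) < u := by
        intro t htt
        have hmem : (-(t • I g)) ∈ Cneg := by
          intro μ hμ
          have : 0 ≤ μ g := hμ g hg
          simp only [neg_neg, ContinuousLinearMap.coe_smul', Pi.smul_apply, smul_eq_mul,
            hI, dual_def]
          simpa using mul_nonneg htt this
        have := hfS _ (hCS _ hmem)
        simpa [hI, dual_def, smul_eq_mul] using this
      have hgne : -η g ≠ 0 := ne_of_gt (by linarith)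
      have hts : (0:ℝ) ≤ (u + 1) / (-η g) := div_nonneg (by linarith) (by linarith)
      have h2 := hb _ hts
      have h3 : -((u + 1) / (-η g) * η g) = u + 1 := by
        rw [show -((u + 1) / (-η g) * η g) = (u + 1) / (-η g) * (-η g) by ring,
          div_mul_cancel₀ _ hgne]
      rw [h3] at h2
      linarith
    have hηe : 0 ≤ η e := hpos e he
    rcases eq_or_lt_of_le hηe with hηe0 | hηe0
    · -- η e = 0 forces η = 0
      have hη0 : ∀ g : X, η g = 0 := by
        intro g
        obtain ⟨c, hc1, hc2⟩ := exists_unit_bound e hnorm g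
        have h1 : 0 ≤ η (c • e - g) := hpos _ (by simpa [sub_nonneg] using hc2)
        have h2 : 0 ≤ η (g + c • e) := hpos _ (neg_le_iff_add_nonneg.mp hc1)
        simp only [map_sub, map_add, map_smul, smul_eq_mul, ← hηe0] at h1 h2
        linarith
      have : z η = 0 := by
        have : η = 0 := ContinuousLinearMap.ext fun g => by simpa using hη0 g
        simp [this]
      linarith [hzη, hu0, this]
    · -- normalize
      set η' : StrongDual ℝ X := (η e)⁻¹ • η with hη'
      have hη'Q : η' ∈ Q := by
        rw [hQ]
        refine ⟨fun g hg => ?_, fun g hg => ?_, ?_⟩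
        · simp [hη', hann g hg]
        · have := hpos g hg
          simp only [hη', ContinuousLinearMap.coe_smul', Pi.smul_apply, smul_eq_mul]
          positivity
        · simp [hη', inv_mul_cancel₀ (ne_of_gt hηe0)]
      have hzle := hz η' hη'Q
      have hzval : z η' = (η e)⁻¹ * z η := by simp [hη', map_smul]
      rw [hzval] at hzle
      have hppos : 0 < (η e)⁻¹ * z η := mul_pos (inv_pos.mpr hηe0) (by linarith)
      linarith
  constructor
  · exact Set.Subset.antisymm (hKcl S₁ (h12.trans h2K)) hmain
  · refine Set.Subset.antisymm (hKcl S₂ h2K) ?_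
    refine hmain.trans ?_
    exact Set.preimage_mono (closure_mono (Set.image_mono h12))
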